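/- arXiv:1010.5772 — 8 statements merged into one kernel-verified Lean document; each statement's English description precedes it below -/
import Mathlib

section
/- The Thue–Morse sequence is overlap-free: there do not exist indices k and a length n ≥ 1 such that t(k+i) = t(k+n+i) for all 0 ≤ i ≤ n (i.e., no factor of the form axaxa where a is a letter and x a word). -/
/-- The Thue–Morse sequence is overlap-free: no factor `axaxa`. -/
theorem thue_morse_overlap_free (t : ℕ → Fin 2)
    (h0 : t 0 = 0) (he : ∀ n, t (2 * n) = t n) (ho : ∀ n, t (2 * n + 1) = 1 - t n) :
    ¬ ∃ (k n : ℕ), 1 ≤ n ∧ ∀ i ≤ n, t (k + i) = t (k + n + i) := by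
  have sub_ne : ∀ x : Fin 2, x ≠ 1 - x := by decide
  have sub_inj : ∀ x y : Fin 2, 1 - x = 1 - y → x = y := by decide
  have two_eq : ∀ x y z : Fin 2, x ≠ y → y ≠ z → x = z := by decide
  -- no three consecutive equal letters
  have noThree : ∀ m, ¬ (t m = t (m+1) ∧ t (m+1) = t (m+2)) := by
    rintro m ⟨h1, h2⟩
    rcases Nat.even_or_odd m with ⟨a, rfl⟩ | ⟨a, rfl⟩
    · have e1 : t (a + a) = t a := by rw [show a + a = 2 * a by ring, he]
      have e2 : t (a + a + 1) = 1 - t a := by rw [show a + a + 1 = 2 * a + 1 by ring, ho]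
      rw [e1, e2] at h1
      exact sub_ne (t a) h1
    · have e1 : t (2 * a + 1 + 1) = t (a + 1) := by
        rw [show 2 * a + 1 + 1 = 2 * (a + 1) by ring, he]
      have e2 : t (2 * a + 1 + 2) = 1 - t (a + 1) := by
        rw [show 2 * a + 1 + 2 = 2 * (a + 1) + 1 by ring, ho]
      rw [e1, e2] at h2
      exact sub_ne (t (a+1)) h2
  have key : ∀ n k, 1 ≤ n → ¬ ∀ i ≤ n, t (k + i) = t (k + n + i) := by
    intro n
    induction n using Nat.strong_induction_on with
    | _ n IH =>
      intro k hn h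
      rcases Nat.even_or_odd n with ⟨m, rfl⟩ | ⟨m, rfl⟩
      · -- even period m + m : halve
        have hm : 1 ≤ m := by omega
        rcases Nat.even_or_odd k with ⟨j, rfl⟩ | ⟨j, rfl⟩
        · apply IH m (by omega) j hm
          intro i hi
          have hh := h (2 * i) (by omega)
          have e1 : t (j + j + 2 * i) = t (j + i) := by
            rw [show j + j + 2 * i = 2 * (j + i) by ring, he]
          have e2 : t (j + j + (m + m) + 2 * i) = t (j + m + i) := by
            rw [show j + j + (m + m) + 2 * i = 2 * (j + m + i) by ring, he]
          rw [e1, e2] at hh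
          exact hh
        · apply IH m (by omega) j hm
          intro i hi
          have hh := h (2 * i) (by omega)
          have e1 : t (2 * j + 1 + 2 * i) = 1 - t (j + i) := by
            rw [show 2 * j + 1 + 2 * i = 2 * (j + i) + 1 by ring, ho]
          have e2 : t (2 * j + 1 + (m + m) + 2 * i) = 1 - t (j + m + i) := by
            rw [show 2 * j + 1 + (m + m) + 2 * i = 2 * (j + m + i) + 1 by ring, ho]
          rw [e1, e2] at hh
          exact sub_inj _ _ hh
      · -- odd period n = 2*m + 1
        by_cases hm : m = 0
        · subst hm
          have a1 := h 0 (by omega)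
          have a2 := h 1 (by omega)
          norm_num at a1 a2
          exact noThree k ⟨a1, by
            have : t (k + 1) = t (k + 1 + 1) := a2
            simpa [Nat.add_assoc] using this⟩
        · -- m ≥ 1, so n ≥ 3
          have hm1 : 1 ≤ m := by omega
          -- t differs at consecutive positions on [k, k + n - 1]
          have alt1 : ∀ i, i < 2 * m + 1 → t (k + i) ≠ t (k + i + 1) := by
            intro i hi
            have hA := h i (by omega)
            have hB := h (i + 1) (by omega)
            rcases Nat.even_or_odd (k + i) with ⟨a, ha⟩ | ⟨a, ha⟩
            · have e1 : t (k + i) = t a := by rw [show k + i = 2 * a by omega, he]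
              have e2 : t (k + i + 1) = 1 - t a := by rw [show k + i + 1 = 2 * a + 1 by omega, ho]
              rw [e1, e2]; exact sub_ne (t a)
            · -- k + n + i is even
              have e1 : t (k + (2 * m + 1) + i) = t (a + m + 1) := by
                rw [show k + (2 * m + 1) + i = 2 * (a + m + 1) by omega, he]
              have e2 : t (k + (2 * m + 1) + (i + 1)) = 1 - t (a + m + 1) := by
                rw [show k + (2 * m + 1) + (i + 1) = 2 * (a + m + 1) + 1 by omega, ho]
              rw [show k + i + 1 = k + (i + 1) by omega, hA, hB, e1, e2]
              exact sub_ne (t (a + m + 1))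
          -- extend the alternation to [k, k + 2*n - 1]
          have alt : ∀ i, i < 2 * (2 * m + 1) → t (k + i) ≠ t (k + i + 1) := by
            intro i hi
            rcases Nat.lt_or_ge i (2 * m + 1) with h1 | h1
            · exact alt1 i h1
            · obtain ⟨i', rfl⟩ : ∃ i', i = (2 * m + 1) + i' := ⟨i - (2 * m + 1), by omega⟩
              have hA := h i' (by omega)
              have hB := h (i' + 1) (by omega)
              have e1 : k + (2 * m + 1 + i') = k + (2 * m + 1) + i' := by omega
              have e2 : k + (2 * m + 1) + i' + 1 = k + (2 * m + 1) + (i' + 1) := by omega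
              rw [e1, e2, ← hA, ← hB]
              have := alt1 i' (by omega)
              simpa [Nat.add_assoc] using this
          -- so values two apart are equal on the window
          have step2 : ∀ x, k ≤ x → x + 2 ≤ k + 2 * (2 * m + 1) → t x = t (x + 2) := by
            intro x hx1 hx2
            obtain ⟨i, rfl⟩ : ∃ i, x = k + i := ⟨x - k, by omega⟩
            have d1 := alt i (by omega)
            have d2 := alt (i + 1) (by omega)
            refine two_eq _ _ _ d1 ?_
            have e : k + (i + 1) + 1 = k + i + 2 := by omega
            rw [← e]; exact d2
          -- pick a with 2a = k or k+1; derive three equal letters on halved sequence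
          set a := (k + 1) / 2 with ha
          have h2a : 2 * a = k ∨ 2 * a = k + 1 := by omega
          have s1 := step2 (2 * a + 1) (by omega) (by omega)
          have s2 := step2 (2 * a + 3) (by omega) (by omega)
          have e1 : t (2 * a + 1) = 1 - t a := ho a
          have e2 : t (2 * a + 3) = 1 - t (a + 1) := by
            rw [show 2 * a + 3 = 2 * (a + 1) + 1 by ring, ho]
          have e3 : t (2 * a + 5) = 1 - t (a + 2) := by
            rw [show 2 * a + 5 = 2 * (a + 2) + 1 by ring, ho]
          rw [show 2 * a + 1 + 2 = 2 * a + 3 by ring] at s1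
          rw [show 2 * a + 3 + 2 = 2 * a + 5 by ring] at s2
          rw [e1, e2] at s1
          rw [e2, e3] at s2
          exact noThree a ⟨sub_inj _ _ s1, sub_inj _ _ s2⟩
  rintro ⟨k, n, hn, h⟩
  exact key n k hn h
end

section
/- The Thue–Morse sequence is cube-free: there is no index k and length n ≥ 1 such that the three consecutive blocks of length n starting at positions k, k+n, and k+2n are all identical. -/
/-- The Thue–Morse sequence is cube-free. -/
theorem thue_morse_cube_free (t : ℕ → Fin 2)
    (h0 : t 0 = 0) (he : ∀ n, t (2 * n) = t n) (ho : ∀ n, t (2 * n + 1) = 1 - t n) :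
    ¬ ∃ (k n : ℕ), 1 ≤ n ∧ ∀ i < n,
      t (k + i) = t (k + n + i) ∧ t (k + n + i) = t (k + 2 * n + i) := by
  have aux1 : ∀ x : Fin 2, x ≠ 1 - x := by decide
  have aux2 : ∀ x y : Fin 2, 1 - x ≠ y → x = y := by decide
  have EC : ∀ {a b a' b' : ℕ}, a = a' → b = b' → t a = t b → t a' = t b' := by
    intro a b a' b' ha hb hne
    subst ha; subst hb; exact hne
  have NC : ∀ {a b a' b' : ℕ}, a = a' → b = b' → t a ≠ t b → t a' ≠ t b' := by
    intro a b a' b' ha hb hne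
    subst ha; subst hb; exact hne
  have key : ∀ a, t (2*a) ≠ t (2*a+1) := by
    intro a
    rw [he, ho]
    exact aux1 _
  -- three equal consecutive letters is impossible
  have three : ∀ b, t b = t (b+1) → t (b+1) = t (b+2) → False := by
    intro b hb1 hb2
    rcases Nat.even_or_odd b with ⟨c, hc⟩ | ⟨c, hc⟩
    · exact key c (EC (by omega) (by omega) hb1)
    · exact key (c+1) (EC (by omega) (by omega) hb2)
  have pairdiff : ∀ b, t (2*b+1) ≠ t (2*b+2) → t (2*b+3) ≠ t (2*b+4) → False := by
    intro b hb1 hb2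
    have B1 : 1 - t b ≠ t (b+1) := by
      have := NC (rfl) (show 2*b+2 = 2*(b+1) by omega) hb1
      rw [ho, he] at this
      exact this
    have B2 : 1 - t (b+1) ≠ t (b+2) := by
      have := NC (show 2*b+3 = 2*(b+1)+1 by omega) (show 2*b+4 = 2*(b+2) by omega) hb2
      rw [ho, he] at this
      exact this
    exact three b (aux2 _ _ B1) (aux2 _ _ B2)
  -- main lemma: no period-n repetition over a window of length 3n
  have L : ∀ n, 1 ≤ n → ∀ k, ¬ (∀ i, i < 2*n → t (k+i) = t (k+i+n)) := by
    intro n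
    induction n using Nat.strong_induction_on with
    | _ n IH =>
      intro hn k h
      rcases Nat.even_or_odd n with ⟨m, hm⟩ | ⟨m, hm⟩
      · -- n even, n = 2m
        have hm1 : 1 ≤ m := by omega
        rcases Nat.even_or_odd k with ⟨l, hl⟩ | ⟨l, hl⟩
        · refine IH m (by omega) hm1 l ?_
          intro j hj
          have := EC (show k + 2*j = 2*(l+j) by omega)
            (show k + 2*j + n = 2*(l+j+m) by omega) (h (2*j) (by omega))
          rw [he, he] at this
          exact this
        · refine IH m (by omega) hm1 (l+1) ?_
          intro j hj
          have := EC (show k + (2*j+1) = 2*(l+1+j) by omega)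
            (show k + (2*j+1) + n = 2*(l+1+j+m) by omega) (h (2*j+1) (by omega))
          rw [he, he] at this
          exact this
      · -- n odd, n = 2m+1
        rcases Nat.eq_or_lt_of_le hn with h1 | h2
        · -- n = 1
          have ha := EC (show k + 0 = k by omega) (show k + 0 + n = k + 1 by omega)
            (h 0 (by omega))
          have hb := EC (show k + 1 = k + 1 by omega) (show k + 1 + n = k + 2 by omega)
            (h 1 (by omega))
          exact three k ha hb
        · -- n ≥ 3
          have hn3 : 3 ≤ n := by omega
          rcases Nat.even_or_odd k with ⟨l, hl⟩ | ⟨l, hl⟩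
          · -- k even, use positions k .. k+3
            have d1 : t (k+0) ≠ t (k+1) := NC (by omega) (by omega) (key l)
            have d2 : t (k+2) ≠ t (k+3) := NC (by omega) (by omega) (key (l+1))
            have A1 : t (k+0+n) ≠ t (k+1+n) := by
              rw [← h 0 (by omega), ← h 1 (by omega)]; exact d1
            have A2 : t (k+2+n) ≠ t (k+3+n) := by
              rw [← h 2 (by omega), ← h 3 (by omega)]; exact d2
            exact pairdiff (l+m)
              (NC (show k+0+n = 2*(l+m)+1 by omega) (show k+1+n = 2*(l+m)+2 by omega) A1)
              (NC (show k+2+n = 2*(l+m)+3 by omega) (show k+3+n = 2*(l+m)+4 by omega) A2)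
          · -- k odd, use positions k+1 .. k+4
            have d1 : t (k+1) ≠ t (k+2) := NC (by omega) (by omega) (key (l+1))
            have d2 : t (k+3) ≠ t (k+4) := NC (by omega) (by omega) (key (l+2))
            have A1 : t (k+1+n) ≠ t (k+2+n) := by
              rw [← h 1 (by omega), ← h 2 (by omega)]; exact d1
            have A2 : t (k+3+n) ≠ t (k+4+n) := by
              rw [← h 3 (by omega), ← h 4 (by omega)]; exact d2
            exact pairdiff (l+m+1)
              (NC (show k+1+n = 2*(l+m+1)+1 by omega) (show k+2+n = 2*(l+m+1)+2 by omega) A1)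
              (NC (show k+3+n = 2*(l+m+1)+3 by omega) (show k+4+n = 2*(l+m+1)+4 by omega) A2)
  rintro ⟨k, n, hn, h⟩
  refine L n hn k ?_
  intro i hi
  rcases Nat.lt_or_ge i n with hlt | hge
  · exact EC (rfl) (show k + n + i = k + i + n by omega) ((h i hlt).1)
  · obtain ⟨j, hj, rfl⟩ : ∃ j, j < n ∧ i = n + j := ⟨i - n, by omega, by omega⟩
    exact EC (show k + n + j = k + (n+j) by omega)
      (show k + 2*n + j = k + (n+j) + n by omega) ((h j hj).2)
end

section
/- If a sequence s : ℕ → Fin 2 is overlap-free, then the ternary sequence whose n-th term is the number of 1's between the n-th and (n+1)-st occurrences of 0 in s is square-free (contains no two adjacent identical blocks of any positive length). -/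
/-- If `s` is overlap-free (with infinitely many zeros, enumerated by `z`), then the
derived sequence counting the 1's between consecutive 0's is square-free. -/
theorem derived_sequence_square_free (s : ℕ → Fin 2) (z : ℕ → ℕ)
    (hmono : StrictMono z)
    (hz0 : ∀ n, s (z n) = 0)
    (hall : ∀ m, s m = 0 → ∃ n, z n = m)
    (hoverlap : ¬ ∃ (k n : ℕ), 1 ≤ n ∧ ∀ i ≤ n, s (k + i) = s (k + n + i)) :
    ¬ ∃ (k n : ℕ), 1 ≤ n ∧ ∀ i < n,
      z (k + i + 1) - z (k + i) - 1 = z (k + n + i + 1) - z (k + n + i) - 1 := by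
  rintro ⟨k, n, hn, hsq⟩
  apply hoverlap
  -- key structural lemma: the zeros in the second block shadow those in the first
  have hdiff : ∀ i ≤ n, z (k + n + i) = z (k + n) + (z (k + i) - z k) := by
    intro i hi
    induction i with
    | zero => simp
    | succ j ih =>
      have hj : j ≤ n := Nat.le_of_succ_le hi
      have hjn : j < n := hi
      have ihj := ih hj
      have hs := hsq j hjn
      have h1 : z (k + j) < z (k + j + 1) := hmono (by omega)
      have h2 : z (k + n + j) < z (k + n + j + 1) := hmono (by omega)
      have h3 : z k ≤ z (k + j) := hmono.le_iff_le.mpr (by omega)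
      have h4 : z (k + n) ≤ z (k + n + j) := hmono.le_iff_le.mpr (by omega)
      show z (k + n + j + 1) = z (k + n) + (z (k + j + 1) - z k)
      omega
  set N := z (k + n) - z k with hNdef
  have hzk : z k < z (k + n) := hmono (by omega)
  have hN : 1 ≤ N := by omega
  have hkN : z k + N = z (k + n) := by omega
  have h2n : z (k + n + n) = z (k + n) + N := by
    have := hdiff n le_rfl; omega
  refine ⟨z k, N, hN, ?_⟩
  have key : ∀ i ≤ N, (s (z k + i) = 0 ↔ s (z k + N + i) = 0) := by
    intro i hi
    have hrw : z k + N + i = z (k + n) + i := by omega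
    rw [hrw]
    constructor
    · intro h0
      obtain ⟨j, hj⟩ := hall _ h0
      have hjk : k ≤ j := by
        by_contra hc
        push_neg at hc
        have := hmono hc
        omega
      have hjkn : j ≤ k + n := by
        by_contra hc
        push_neg at hc
        have := hmono hc
        omega
      obtain ⟨t, ht, rfl⟩ : ∃ t ≤ n, j = k + t := ⟨j - k, by omega, by omega⟩
      have hd := hdiff t ht
      have h3 : z k ≤ z (k + t) := hmono.le_iff_le.mpr (by omega)
      have : z (k + n + t) = z (k + n) + i := by omega
      rw [← this]
      exact hz0 _
    · intro h0
      obtain ⟨j, hj⟩ := hall _ h0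
      have hjk : k + n ≤ j := by
        by_contra hc
        push_neg at hc
        have := hmono hc
        omega
      have hjkn : j ≤ k + n + n := by
        by_contra hc
        push_neg at hc
        have := hmono hc
        omega
      obtain ⟨t, ht, rfl⟩ : ∃ t ≤ n, j = k + n + t := ⟨j - (k + n), by omega, by omega⟩
      have hd := hdiff t ht
      have h3 : z k ≤ z (k + t) := hmono.le_iff_le.mpr (by omega)
      have : z (k + t) = z k + i := by omega
      rw [← this]
      exact hz0 _
  intro i hi
  have hk2 := key i hi
  have h2 : ∀ x : Fin 2, x = 0 ∨ x = 1 := by decide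
  rcases h2 (s (z k + i)) with h | h <;> rcases h2 (s (z k + N + i)) with h' | h'
  · rw [h, h']
  · exact absurd (hk2.mp h) (by rw [h']; decide)
  · exact absurd (hk2.mpr h') (by rw [h]; decide)
  · rw [h, h']
end

section
/- Lefthanded Local Lemma: Let 𝒜 be a finite family of events in a probability space, viewed as vertices of a directed graph G with out-neighborhoods Γ(A), and equipped with a quasi-order ≤ such that for all A ∈ 𝒜, all B ∈ Γ(A), and all C ∉ Γ(A) ∪ {A}, either ¬(C > B) or C > A. Suppose there are reals 0 < x_A < 1 such that for every A ∈ 𝒜 and every family 𝒞 ⊆ 𝒜 \ Γ(A) with ¬(C > A) for all C ∈ 𝒞 (and P(⋂_{C∈𝒞} Cᶜ) > 0), we have P(A | ⋂_{C∈𝒞} Cᶜ) ≤ x_A · ∏_{B ∈ Γ(A)} (1 − x_B). Then for any disjoint families 𝒜₁, 𝒜₂ ⊆ 𝒜 with ¬(A₂ > A₁) for all A₁ ∈ 𝒜₁, A₂ ∈ 𝒜₂, we have P(⋂_{A₁∈𝒜₁} A₁ᶜ | ⋂_{A₂∈𝒜₂} A₂ᶜ) ≥ ∏_{A₁∈𝒜₁}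 (1 − x_{A₁}); in particular P(⋂_{A∈𝒜} Aᶜ) > 0. -/
open MeasureTheory
open scoped ENNReal

/-- A finite nonempty set has an element maximal with respect to the strict part of a
transitive relation. -/
lemma llll_exists_max {ι : Type*} (le : ι → ι → Prop)
    (htrans : ∀ a b c, le a b → le b c → le a c)
    (s : Finset ι) (hs : s.Nonempty) :
    ∃ A ∈ s, ∀ C ∈ s, ¬ (le A C ∧ ¬ le C A) := by
  classical
  induction s using Finset.induction_on with
  | empty => exact absurd hs (by simp)
  | @insert a s ha ih =>
    rcases s.eq_empty_or_nonempty with rfl | hs'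
    · refine ⟨a, by simp, ?_⟩
      rintro C hC ⟨h1, h2⟩
      simp only [Finset.mem_insert, Finset.notMem_empty, or_false] at hC
      subst hC; exact h2 h1
    · obtain ⟨A, hA, hmax⟩ := ih hs'
      by_cases hAa : le A a ∧ ¬ le a A
      · refine ⟨a, Finset.mem_insert_self _ _, ?_⟩
        rintro C hC ⟨h1, h2⟩
        rcases Finset.mem_insert.mp hC with rfl | hC
        · exact h2 h1
        · exact hmax C hC ⟨htrans _ _ _ hAa.1 h1, fun h => h2 (htrans _ _ _ h hAa.1)⟩
      · refine ⟨A, Finset.mem_insert_of_mem hA, ?_⟩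
        rintro C hC h
        rcases Finset.mem_insert.mp hC with rfl | hC
        · exact hAa h
        · exact hmax C hC h

/-- Intersection over a union of finsets. -/
lemma llll_biInter_union {ι Ω : Type*} [DecidableEq ι] (s t : Finset ι) (f : ι → Set Ω) :
    ⋂ x ∈ s ∪ t, f x = (⋂ x ∈ s, f x) ∩ ⋂ x ∈ t, f x := by
  ext a; simp only [Set.mem_iInter, Set.mem_inter_iff, Finset.mem_union]
  constructor
  · intro h; exact ⟨fun i hi => h i (Or.inl hi), fun i hi => h i (Or.inr hi)⟩
  · rintro ⟨h1, h2⟩ i (hi | hi); exacts [h1 i hi, h2 i hi]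

/-- The main induction for the lefthanded local lemma, in product (division-free) form. -/
lemma llll_key {Ω ι : Type*} [MeasurableSpace Ω] [DecidableEq ι]
    (μ : Measure Ω) [IsProbabilityMeasure μ]
    (𝒜 : Finset ι) (E : ι → Set Ω) (Γ : ι → Finset ι)
    (le : ι → ι → Prop)
    (htrans : ∀ a b c, le a b → le b c → le a c)
    (hG : ∀ A ∈ 𝒜, ∀ B ∈ Γ A, ∀ C ∈ 𝒜, C ∉ Γ A → C ≠ A →
      ¬ (le B C ∧ ¬ le C B) ∨ (le A C ∧ ¬ le C A))
    (x : ι → ℝ≥0∞) (hx1 : ∀ A ∈ 𝒜, x A < 1)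
    (hmain : ∀ A ∈ 𝒜, ∀ 𝒞 ⊆ 𝒜 \ Γ A, (∀ C ∈ 𝒞, ¬ (le A C ∧ ¬ le C A)) →
      0 < μ (⋂ C ∈ 𝒞, (E C)ᶜ) →
      μ (E A ∩ ⋂ C ∈ 𝒞, (E C)ᶜ) / μ (⋂ C ∈ 𝒞, (E C)ᶜ)
        ≤ x A * ∏ B ∈ Γ A, (1 - x B)) :
    ∀ n : ℕ, ∀ 𝒜₁ 𝒜₂ : Finset ι, 𝒜₁.card + 𝒜₂.card ≤ n →
      𝒜₁ ⊆ 𝒜 → 𝒜₂ ⊆ 𝒜 → Disjoint 𝒜₁ 𝒜₂ →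
      (∀ A₁ ∈ 𝒜₁, ∀ A₂ ∈ 𝒜₂, ¬ (le A₁ A₂ ∧ ¬ le A₂ A₁)) →
      (∏ A₁ ∈ 𝒜₁, (1 - x A₁)) * μ (⋂ A₂ ∈ 𝒜₂, (E A₂)ᶜ)
        ≤ μ ((⋂ A₁ ∈ 𝒜₁, (E A₁)ᶜ) ∩ ⋂ A₂ ∈ 𝒜₂, (E A₂)ᶜ) := by
  intro n
  induction n with
  | zero =>
    intro 𝒜₁ 𝒜₂ hcard _ _ _ _
    have h1 : 𝒜₁ = ∅ := Finset.card_eq_zero.mp (by omega)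
    subst h1
    simp
  | succ n ih =>
    intro 𝒜₁ 𝒜₂ hcard hsub1 hsub2 hdisj hle
    rcases 𝒜₁.eq_empty_or_nonempty with rfl | hne
    · simp
    · obtain ⟨A, hA𝒜₁, hAmax⟩ := llll_exists_max le htrans 𝒜₁ hne
      have hA𝒜 : A ∈ 𝒜 := hsub1 hA𝒜₁
      set s : Finset ι := 𝒜₁.erase A with hs_def
      set 𝒞 : Finset ι := s ∪ 𝒜₂ with h𝒞_def
      have hssub : s ⊆ 𝒜₁ := Finset.erase_subset _ _
      have h𝒞sub : 𝒞 ⊆ 𝒜 := Finset.union_subset (hssub.trans hsub1) hsub2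
      have hA𝒞 : A ∉ 𝒞 := by
        simp only [h𝒞_def, Finset.mem_union, not_or]
        exact ⟨Finset.notMem_erase _ _, Finset.disjoint_left.mp hdisj hA𝒜₁⟩
      have h𝒞le : ∀ C ∈ 𝒞, ¬ (le A C ∧ ¬ le C A) := by
        intro C hC
        rcases Finset.mem_union.mp hC with hC | hC
        · exact hAmax C (hssub hC)
        · exact hle A hA𝒜₁ C hC
      have hscard : s.card = 𝒜₁.card - 1 := Finset.card_erase_of_mem hA𝒜₁
      have hA₁pos : 0 < 𝒜₁.card := Finset.card_pos.mpr hne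
      have h𝒞card : 𝒞.card ≤ n := by
        have := Finset.card_union_le s 𝒜₂
        rw [← h𝒞_def] at this
        omega
      -- single-event step
      have hsingle : μ (E A ∩ ⋂ C ∈ 𝒞, (E C)ᶜ) ≤ x A * μ (⋂ C ∈ 𝒞, (E C)ᶜ) := by
        set 𝒞₁ : Finset ι := 𝒞 ∩ Γ A with h𝒞₁_def
        set 𝒞₂ : Finset ι := 𝒞 \ Γ A with h𝒞₂_def
        have hsplit : 𝒞₁ ∪ 𝒞₂ = 𝒞 := by
          ext a; simp only [h𝒞₁_def, h𝒞₂_def, Finset.mem_union, Finset.mem_inter,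
            Finset.mem_sdiff]; tauto
        have hdisj12 : Disjoint 𝒞₁ 𝒞₂ := by
          rw [Finset.disjoint_left]
          intro a ha1 ha2
          exact (Finset.mem_sdiff.mp ha2).2 (Finset.mem_inter.mp ha1).2
        have h𝒞₂sub : 𝒞₂ ⊆ 𝒞 := Finset.sdiff_subset
        have h𝒞₁sub : 𝒞₁ ⊆ 𝒞 := Finset.inter_subset_left
        have hIcap : (⋂ C ∈ 𝒞, (E C)ᶜ) = (⋂ C ∈ 𝒞₁, (E C)ᶜ) ∩ ⋂ C ∈ 𝒞₂, (E C)ᶜ := by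
          rw [← hsplit, llll_biInter_union]
        have hcard12 : 𝒞₁.card + 𝒞₂.card ≤ n := by
          have := Finset.card_union_of_disjoint hdisj12
          rw [hsplit] at this
          omega
        have hpos2 : 0 < μ (⋂ C ∈ 𝒞₂, (E C)ᶜ) := by
          have h0 := ih 𝒞₂ ∅ (by simpa using le_trans (Finset.card_le_card h𝒞₂sub) h𝒞card)
            (h𝒞₂sub.trans h𝒞sub) (Finset.empty_subset _) (Finset.disjoint_empty_right _)
            (by simp)
          simp only [Finset.notMem_empty, Set.iInter_of_empty, Set.iInter_univ,
            measure_univ, mul_one, Set.inter_univ] at h0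
          calc (0 : ℝ≥0∞) < ∏ C ∈ 𝒞₂, (1 - x C) := by
                rw [CanonicallyOrderedAdd.prod_pos]
                intro C hC
                exact tsub_pos_of_lt (hx1 C (h𝒞sub (h𝒞₂sub hC)))
            _ ≤ _ := h0
        have hnum : μ (E A ∩ ⋂ C ∈ 𝒞₂, (E C)ᶜ)
            ≤ (x A * ∏ B ∈ Γ A, (1 - x B)) * μ (⋂ C ∈ 𝒞₂, (E C)ᶜ) := by
          rw [← ENNReal.div_le_iff hpos2.ne' (measure_ne_top μ _)]
          refine hmain A hA𝒜 𝒞₂ ?_ (fun C hC => h𝒞le C (h𝒞₂sub hC)) hpos2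
          intro a ha
          rw [Finset.mem_sdiff] at ha ⊢
          exact ⟨h𝒞sub ha.1, ha.2⟩
        have hprod : (∏ B ∈ Γ A, (1 - x B)) ≤ ∏ B ∈ 𝒞₁, (1 - x B) := by
          have hsubΓ : 𝒞₁ ⊆ Γ A := Finset.inter_subset_right
          rw [← Finset.prod_sdiff hsubΓ]
          calc (∏ B ∈ Γ A \ 𝒞₁, (1 - x B)) * ∏ B ∈ 𝒞₁, (1 - x B)
              ≤ 1 * ∏ B ∈ 𝒞₁, (1 - x B) :=
                mul_le_mul' (Finset.prod_le_one' (fun i _ => tsub_le_self)) le_rfl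
            _ = _ := one_mul _
        have hden := ih 𝒞₁ 𝒞₂ hcard12 (h𝒞₁sub.trans h𝒞sub) (h𝒞₂sub.trans h𝒞sub) hdisj12
          (by
            intro C₁ hC₁ C₂ hC₂
            have hC₁Γ : C₁ ∈ Γ A := (Finset.mem_inter.mp hC₁).2
            have hC₂' := Finset.mem_sdiff.mp hC₂
            have hC₂A : C₂ ≠ A := fun h => hA𝒞 (h ▸ h𝒞₂sub hC₂)
            rcases hG A hA𝒜 C₁ hC₁Γ C₂ (h𝒞sub hC₂'.1) hC₂'.2 hC₂A with h | h
            · exact h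
            · exact absurd h (h𝒞le C₂ hC₂'.1))
        calc μ (E A ∩ ⋂ C ∈ 𝒞, (E C)ᶜ)
            ≤ μ (E A ∩ ⋂ C ∈ 𝒞₂, (E C)ᶜ) := by
              refine measure_mono (Set.inter_subset_inter_right _ ?_)
              rw [hIcap]; exact Set.inter_subset_right
          _ ≤ (x A * ∏ B ∈ Γ A, (1 - x B)) * μ (⋂ C ∈ 𝒞₂, (E C)ᶜ) := hnum
          _ = x A * ((∏ B ∈ Γ A, (1 - x B)) * μ (⋂ C ∈ 𝒞₂, (E C)ᶜ)) := mul_assoc _ _ _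
          _ ≤ x A * ((∏ B ∈ 𝒞₁, (1 - x B)) * μ (⋂ C ∈ 𝒞₂, (E C)ᶜ)) :=
              mul_le_mul' le_rfl (mul_le_mul' hprod le_rfl)
          _ ≤ x A * μ ((⋂ C ∈ 𝒞₁, (E C)ᶜ) ∩ ⋂ C ∈ 𝒞₂, (E C)ᶜ) := mul_le_mul' le_rfl hden
          _ = x A * μ (⋂ C ∈ 𝒞, (E C)ᶜ) := by rw [hIcap]
      -- assemble
      have hsetid : (⋂ A₁ ∈ 𝒜₁, (E A₁)ᶜ) ∩ ⋂ A₂ ∈ 𝒜₂, (E A₂)ᶜ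
          = (⋂ C ∈ 𝒞, (E C)ᶜ) \ E A := by
        have h𝒜₁ : 𝒜₁ = insert A s := (Finset.insert_erase hA𝒜₁).symm
        rw [h𝒞_def, llll_biInter_union, h𝒜₁, Finset.set_biInter_insert, Set.diff_eq]
        ext ω
        simp only [Set.mem_inter_iff, Set.mem_compl_iff]
        tauto
      have hxA : x A < 1 := hx1 A hA𝒜
      set m : ℝ≥0∞ := μ (⋂ C ∈ 𝒞, (E C)ᶜ) with hm_def
      have hkey1 : (1 - x A) * m ≤ μ ((⋂ C ∈ 𝒞, (E C)ᶜ) \ E A) := by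
        have hfin : x A * m ≠ ⊤ :=
          ENNReal.mul_ne_top hxA.ne_top (measure_ne_top μ _)
        have hsum : (1 - x A) * m + x A * m = m := by
          rw [← add_mul, tsub_add_cancel_of_le hxA.le, one_mul]
        have hstep : m ≤ μ ((⋂ C ∈ 𝒞, (E C)ᶜ) \ E A) + x A * m := by
          calc m ≤ μ ((⋂ C ∈ 𝒞, (E C)ᶜ) ∩ E A) + μ ((⋂ C ∈ 𝒞, (E C)ᶜ) \ E A) :=
                measure_le_inter_add_diff μ _ _
            _ ≤ x A * m + μ ((⋂ C ∈ 𝒞, (E C)ᶜ) \ E A) := by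
                refine add_le_add ?_ le_rfl
                rw [Set.inter_comm]
                exact hsingle
            _ = _ := add_comm _ _
        rw [← ENNReal.add_le_add_iff_right hfin, hsum]
        exact hstep
      have hkey2 : (∏ A₁ ∈ s, (1 - x A₁)) * μ (⋂ A₂ ∈ 𝒜₂, (E A₂)ᶜ) ≤ m := by
        have := ih s 𝒜₂ (by omega) (hssub.trans hsub1) hsub2
          (Finset.disjoint_of_subset_left hssub hdisj)
          (fun A₁ h1 A₂ h2 => hle A₁ (hssub h1) A₂ h2)
        rw [hm_def, h𝒞_def, llll_biInter_union]
        exact this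
      calc (∏ A₁ ∈ 𝒜₁, (1 - x A₁)) * μ (⋂ A₂ ∈ 𝒜₂, (E A₂)ᶜ)
          = (1 - x A) * ((∏ A₁ ∈ s, (1 - x A₁)) * μ (⋂ A₂ ∈ 𝒜₂, (E A₂)ᶜ)) := by
            rw [hs_def, ← mul_assoc]
            conv_lhs => rw [(Finset.insert_erase hA𝒜₁).symm]
            rw [Finset.prod_insert (Finset.notMem_erase _ _)]
        _ ≤ (1 - x A) * m := mul_le_mul' le_rfl hkey2
        _ ≤ μ ((⋂ C ∈ 𝒞, (E C)ᶜ) \ E A) := hkey1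
        _ = μ ((⋂ A₁ ∈ 𝒜₁, (E A₁)ᶜ) ∩ ⋂ A₂ ∈ 𝒜₂, (E A₂)ᶜ) := by rw [hsetid]

/-- The Lefthanded Local Lemma.  Events `E A` for `A` in a finite family `𝒜`, a
dependency digraph with out-neighborhoods `Γ A`, and a quasi-order `le` satisfying
the lefthanded compatibility condition.  Here `P(X|Y)` is `μ (X ∩ Y) / μ Y` and
`C > A` means `le A C ∧ ¬ le C A`. -/
theorem lefthanded_local_lemma {Ω ι : Type*} [MeasurableSpace Ω] [DecidableEq ι]
    (μ : Measure Ω) [IsProbabilityMeasure μ]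
    (𝒜 : Finset ι) (E : ι → Set Ω) (Γ : ι → Finset ι)
    (le : ι → ι → Prop) (hrefl : ∀ a, le a a)
    (htrans : ∀ a b c, le a b → le b c → le a c)
    (hG : ∀ A ∈ 𝒜, ∀ B ∈ Γ A, ∀ C ∈ 𝒜, C ∉ Γ A → C ≠ A →
      ¬ (le B C ∧ ¬ le C B) ∨ (le A C ∧ ¬ le C A))
    (x : ι → ℝ≥0∞) (hx0 : ∀ A ∈ 𝒜, 0 < x A) (hx1 : ∀ A ∈ 𝒜, x A < 1)
    (hmain : ∀ A ∈ 𝒜, ∀ 𝒞 ⊆ 𝒜 \ Γ A, (∀ C ∈ 𝒞, ¬ (le A C ∧ ¬ le C A)) →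
      0 < μ (⋂ C ∈ 𝒞, (E C)ᶜ) →
      μ (E A ∩ ⋂ C ∈ 𝒞, (E C)ᶜ) / μ (⋂ C ∈ 𝒞, (E C)ᶜ)
        ≤ x A * ∏ B ∈ Γ A, (1 - x B)) :
    (∀ 𝒜₁ 𝒜₂ : Finset ι, 𝒜₁ ⊆ 𝒜 → 𝒜₂ ⊆ 𝒜 → Disjoint 𝒜₁ 𝒜₂ →
      (∀ A₁ ∈ 𝒜₁, ∀ A₂ ∈ 𝒜₂, ¬ (le A₁ A₂ ∧ ¬ le A₂ A₁)) →
      μ ((⋂ A₁ ∈ 𝒜₁, (E A₁)ᶜ) ∩ ⋂ A₂ ∈ 𝒜₂, (E A₂)ᶜ) / μ (⋂ A₂ ∈ 𝒜₂, (E A₂)ᶜ)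
        ≥ ∏ A₁ ∈ 𝒜₁, (1 - x A₁))
    ∧ 0 < μ (⋂ A ∈ 𝒜, (E A)ᶜ) := by
  have key := llll_key μ 𝒜 E Γ le htrans hG x hx1 hmain
  have hposgen : ∀ 𝒜₂ : Finset ι, 𝒜₂ ⊆ 𝒜 → 0 < μ (⋂ A₂ ∈ 𝒜₂, (E A₂)ᶜ) := by
    intro 𝒜₂ hsub
    have h0 := key 𝒜₂.card 𝒜₂ ∅ (by simp) hsub (Finset.empty_subset _)
      (Finset.disjoint_empty_right _) (by simp)
    simp only [Finset.notMem_empty, Set.iInter_of_empty, Set.iInter_univ,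
      measure_univ, mul_one, Set.inter_univ] at h0
    calc (0 : ℝ≥0∞) < ∏ C ∈ 𝒜₂, (1 - x C) := by
          rw [CanonicallyOrderedAdd.prod_pos]
          intro C hC
          exact tsub_pos_of_lt (hx1 C (hsub hC))
      _ ≤ _ := h0
  constructor
  · intro 𝒜₁ 𝒜₂ hsub1 hsub2 hdisj hle
    have hkey := key (𝒜₁.card + 𝒜₂.card) 𝒜₁ 𝒜₂ le_rfl hsub1 hsub2 hdisj hle
    have hpos := hposgen 𝒜₂ hsub2
    rw [ge_iff_le, ENNReal.le_div_iff_mul_le (Or.inl hpos.ne') (Or.inl (measure_ne_top μ _))]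
    exact hkey
  · exact hposgen 𝒜 subset_rfl
end

section
/- If an interval I of length kr (r ≥ 2) contains a prismatic pair of k-term arithmetic progressions of common difference r with respect to a coloring χ, then no two of the k consecutive subintervals of length r that partition I carry identical color blocks. -/
/-- If the interval `[ℓ+1, ℓ+kr]` (`r ≥ 2`) contains a prismatic pair of `k`-term
arithmetic progressions of difference `r` (progressions `a, a+r, ...` and
`a+1, a+1+r, ...`), then no two of the `k` consecutive length-`r` subintervals of
the interval carry identical color blocks. -/
theorem prismatic_pair_blocks_distinct {c : ℕ} (χ : ℕ → Fin c)
    (k r ℓ a : ℕ) (hk : 2 ≤ k) (hr : 2 ≤ r)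
    (hlow : ℓ + 1 ≤ a) (hhigh : a + 1 + (k - 1) * r ≤ ℓ + k * r)
    (hα : ∀ i j, i < j → j < k → Odd (a + j * r) → χ (a + i * r) ≠ χ (a + j * r))
    (hβ : ∀ i j, i < j → j < k →
      Odd (a + 1 + j * r) → χ (a + 1 + i * r) ≠ χ (a + 1 + j * r)) :
    ∀ m m', m < m' → m' < k →
      ¬ (∀ i, 1 ≤ i → i ≤ r → χ (ℓ + m * r + i) = χ (ℓ + m' * r + i)) := by
  intro m m' hmm hm'k h
  have h1 : r ≤ k * r := Nat.le_mul_of_pos_left r (by omega)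
  have h2 : (k - 1) * r + r = k * r := by
    rw [Nat.sub_mul, one_mul, Nat.sub_add_cancel h1]
  have ha1 : a + 1 ≤ ℓ + r := by
    rw [← h2] at hhigh
    generalize (k - 1) * r = s at hhigh
    omega
  rcases Nat.even_or_odd (a + m' * r) with he | ho
  · have hodd : Odd (a + 1 + m' * r) := by
      rw [add_right_comm]; exact he.add_one
    have hne := hβ m m' hmm hm'k hodd
    have e : ∀ x, ℓ + x + (a - ℓ + 1) = a + 1 + x := fun x => by omega
    have key := h (a - ℓ + 1) (by omega) (by omega)
    rw [e, e] at key
    exact hne key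
  · have hne := hα m m' hmm hm'k ho
    have e : ∀ x, ℓ + x + (a - ℓ) = a + x := fun x => by omega
    have key := h (a - ℓ) (by omega) (by omega)
    rw [e, e] at key
    exact hne key
end

section
/- In the 3-ary sequence game where Player 2 always responds to Player 1's move a ∈ ℤ/3 with a+1 (mod 3), every play of the game contains, within the first 16 symbols, two adjacent identical blocks of length ≥ 2. Equivalently: for every sequence s : ℕ → ℤ/3 satisfying s(2k+1) = s(2k) + 1 (mod 3) for all k, there exist an index j and a length n ≥ 2 with j + 2n ≤ 16 such that s(j+i) = s(j+n+i) for all 0 ≤ i < n. -/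
/-- Candidate (start, length) pairs for squares, found by greedy set cover. -/
def sqCands : List (ℕ × ℕ) :=
  [(0,2),(2,2),(4,2),(6,2),(8,2),(10,2),(12,2),(0,3),(0,4),(2,3),(4,4),(6,3),
   (6,4),(10,3),(2,6),(2,4),(4,3),(8,3),(8,4)]

/-- Packs the first `2*k` symbols of the play encoded by `m` (base-3 digits of `m`
are Player 1's moves) into a base-4 number. -/
def wOf : ℕ → ℕ → ℕ
  | _, 0 => 0
  | m, k+1 => m % 3 + 4 * ((m % 3 + 1) % 3) + 16 * wOf (m / 3) k

def chkW (w : ℕ) : Bool :=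
  sqCands.any fun p => w / 4^p.1 % 4^p.2 == w / 4^(p.1+p.2) % 4^p.2

def chk (m : ℕ) : Bool := chkW (wOf m 8)

def allTree : ℕ → ℕ → Bool
  | s, 0 => chk s
  | s, d+1 => allTree s d && allTree (s + 2^d) d

set_option maxRecDepth 10000 in
set_option maxHeartbeats 4000000 in
lemma allT : allTree 0 13 = true := by decide

lemma allTree_spec : ∀ d s, allTree s d = true → ∀ i < 2^d, chk (s+i) = true := by
  intro d
  induction d with
  | zero => intro s hs i hi; interval_cases i; simpa [allTree] using hs
  | succ d ih =>
    intro s hs i hi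
    rw [allTree, Bool.and_eq_true] at hs
    rcases lt_or_ge i (2^d) with h' | h'
    · exact ih s hs.1 i h'
    · have h2 : i - 2^d < 2^d := by
        have : 2^(d+1) = 2 * 2^d := by ring
        omega
      have := ih (s + 2^d) hs.2 (i - 2^d) h2
      have he : s + 2^d + (i - 2^d) = s + i := by omega
      rwa [he] at this

lemma chk_true : ∀ m < 8192, chk m = true := by
  intro m hm
  simpa using allTree_spec 13 0 allT m (by norm_num; omega)

lemma cands_spec : ∀ p ∈ sqCands, 2 ≤ p.2 ∧ p.1 + 2 * p.2 ≤ 16 := by decide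

/-- extract a digit of a low-order slice -/
lemma digit_of_mod_eq {A B n : ℕ} (h : A % 4^n = B % 4^n) :
    ∀ i < n, A / 4^i % 4 = B / 4^i % 4 := by
  intro i hi
  have h4 : (4:ℕ)^n = 4^i * 4^(n-i) := by rw [← pow_add]; congr 1; omega
  have hA : A % 4^n / 4^i = A / 4^i % 4^(n-i) := by
    rw [h4, Nat.mod_mul_right_div_self]
  have hB : B % 4^n / 4^i = B / 4^i % 4^(n-i) := by
    rw [h4, Nat.mod_mul_right_div_self]
  have hd : (4:ℕ) ∣ 4^(n-i) := dvd_pow_self 4 (by omega)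
  calc A / 4^i % 4 = A / 4^i % 4^(n-i) % 4 := (Nat.mod_mod_of_dvd _ hd).symm
    _ = B / 4^i % 4^(n-i) % 4 := by rw [← hA, ← hB, h]
    _ = B / 4^i % 4 := Nat.mod_mod_of_dvd _ hd

lemma wOf_digit : ∀ k m p, p < 2*k →
    wOf m k / 4^p % 4 = (m / 3^(p/2) % 3 + p % 2) % 3 := by
  intro k
  induction k with
  | zero => omega
  | succ k ih =>
    intro m p hp
    rw [wOf]
    rcases Nat.lt_or_ge p 2 with h2 | h2
    · have h1 : m % 3 < 3 := Nat.mod_lt _ (by norm_num)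
      have h3 : (m % 3 + 1) % 3 < 3 := Nat.mod_lt _ (by norm_num)
      have L : ∀ a b w : ℕ, a < 4 → b < 4 →
          (a + 4*b + 16*w) % 4 = a ∧ (a + 4*b + 16*w) / 4 % 4 = b := by
        intro a b w ha hb
        omega
      interval_cases p
      · simpa using (L _ _ (wOf (m/3) k) (by omega) (by omega)).1
      · simpa using (L _ _ (wOf (m/3) k) (by omega) (by omega)).2
    · have hpow : (4:ℕ)^p = 16 * 4^(p-2) := by
        have : p = 2 + (p - 2) := by omega
        rw [this, pow_add]; norm_num
      have h1 : m % 3 < 3 := Nat.mod_lt _ (by norm_num)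
      have h3 : (m % 3 + 1) % 3 < 3 := Nat.mod_lt _ (by norm_num)
      have hdiv : (m % 3 + 4 * ((m % 3 + 1) % 3) + 16 * wOf (m/3) k) / 4^p
          = wOf (m/3) k / 4^(p-2) := by
        rw [hpow, ← Nat.div_div_eq_div_mul]
        congr 1
        omega
      rw [hdiv, ih (m/3) (p-2) (by omega)]
      have e1 : m / 3 / 3^((p-2)/2) = m / 3^(p/2) := by
        rw [Nat.div_div_eq_div_mul, ← pow_succ']
        congr 2
        omega
      have e2 : (p-2) % 2 = p % 2 := by omega
      rw [e1, e2]

/-- In the ternary sequence game, if Player 2 always answers Player 1's move `a` with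
`a + 1 (mod 3)`, then within the first 16 symbols there are two adjacent identical
blocks of length at least 2. -/
theorem player_two_plus_one_strategy_wins (s : ℕ → ZMod 3)
    (h : ∀ k, s (2 * k + 1) = s (2 * k) + 1) :
    ∃ j n : ℕ, 2 ≤ n ∧ j + 2 * n ≤ 16 ∧ ∀ i < n, s (j + i) = s (j + n + i) := by
  set a : ℕ → ℕ := fun k => (s (2 * k)).val with ha
  have hav : ∀ k, a k < 3 := fun k => ZMod.val_lt _
  set m : ℕ := a 0 + 3 * a 1 + 9 * a 2 + 27 * a 3 + 81 * a 4 + 243 * a 5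
      + 729 * a 6 + 2187 * a 7 with hm
  have hmlt : m < 8192 := by
    have h0 := hav 0; have h1 := hav 1; have h2 := hav 2; have h3 := hav 3
    have h4 := hav 4; have h5 := hav 5; have h6 := hav 6; have h7 := hav 7
    omega
  have hdig : ∀ k < 8, m / 3^k % 3 = a k := by
    have h0 := hav 0; have h1 := hav 1; have h2 := hav 2; have h3 := hav 3
    have h4 := hav 4; have h5 := hav 5; have h6 := hav 6; have h7 := hav 7
    intro k hk
    interval_cases k <;> simp only [hm] <;> norm_num <;> omega
  -- value of each of the first 16 symbols
  have hsym : ∀ p < 16, wOf m 8 / 4^p % 4 = (s p).val := by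
    intro p hp
    rw [wOf_digit 8 m p (by omega)]
    rcases Nat.even_or_odd p with ⟨q, hq⟩ | ⟨q, hq⟩
    · subst hq
      rw [show (q+q)/2 = q by omega, show (q+q)%2 = 0 by omega, hdig q (by omega),
          Nat.add_zero, Nat.mod_eq_of_lt (hav q), show q+q = 2*q by ring]
    · subst hq
      rw [show (2*q+1)/2 = q by omega, show (2*q+1)%2 = 1 by omega, hdig q (by omega),
          h q, ZMod.val_add, ZMod.val_one]
  have hc := chk_true m hmlt
  rw [chk, chkW, List.any_eq_true] at hc
  obtain ⟨⟨j, n⟩, hmem, hbeq⟩ := hc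
  have heq : wOf m 8 / 4^j % 4^n = wOf m 8 / 4^(j+n) % 4^n := by
    simpa using hbeq
  obtain ⟨hn2, hjn⟩ := cands_spec _ hmem
  refine ⟨j, n, hn2, hjn, fun i hi => ?_⟩
  have hd := digit_of_mod_eq heq i hi
  rw [Nat.div_div_eq_div_mul, Nat.div_div_eq_div_mul, ← pow_add, ← pow_add] at hd
  have hv : (s (j + i)).val = (s (j + n + i)).val := by
    rw [← hsym (j+i) (by omega), ← hsym (j+n+i) (by omega)]
    convert hd using 3
  exact ZMod.val_injective _ hv
end

section
/- Weight product bound for the pattern-avoidance game: let 0 < b ≤ 1/2, φ(b) = ∏_{j≥1}(1−b^j), and C = 8(1−b)⁶/(b·φ(b)^{24}). Then for every integer c ≥ C and every integer n₀ ≥ 4: 2^{⌊n₀/2⌋}/c^{⌊⌈n₀/2⌉/2⌋} ≤ b^{⌊⌈n₀/2⌉/2⌋} · ∏_{n=4}^∞ (1 − b^{⌊⌈n/2⌉/2⌋})^{n₀}. -/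
open Real

private lemma pg_neg_log_le (b : ℝ) (hb0 : 0 < b) (hb : b ≤ 1 / 2) (n : ℕ) (hn : n ≠ 0) :
    -Real.log (1 - b ^ n) ≤ 2 * b ^ n := by
  have hb1 : b < 1 := lt_of_le_of_lt hb (by norm_num)
  have hbn0 : 0 ≤ b ^ n := pow_nonneg hb0.le n
  have hbn : b ^ n ≤ 1 / 2 := le_trans (pow_le_of_le_one hb0.le hb1.le hn) hb
  have h0 : (0:ℝ) < 1 - b ^ n := by linarith
  have h1 : Real.log ((1 - b ^ n)⁻¹) ≤ (1 - b ^ n)⁻¹ - 1 :=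
    Real.log_le_sub_one_of_pos (by positivity)
  rw [Real.log_inv] at h1
  have h2 : (1 - b ^ n)⁻¹ ≤ 2 := by
    rw [inv_le_comm₀ h0 (by norm_num)]; linarith
  have h3 : (1 - b ^ n)⁻¹ - 1 = b ^ n * (1 - b ^ n)⁻¹ := by field_simp; ring
  rw [h3] at h1
  calc -Real.log (1 - b ^ n) ≤ b ^ n * (1 - b ^ n)⁻¹ := h1
    _ ≤ b ^ n * 2 := by gcongr
    _ = 2 * b ^ n := by ring

private lemma pg_summable_log (b : ℝ) (hb0 : 0 < b) (hb : b ≤ 1 / 2) :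
    Summable (fun j : ℕ => Real.log (1 - b ^ (j + 1))) := by
  have hb1 : b < 1 := lt_of_le_of_lt hb (by norm_num)
  rw [← summable_neg_iff]
  apply Summable.of_nonneg_of_le (f := fun j : ℕ => 2 * b ^ (j + 1))
  · intro j
    have hle : b ^ (j+1) ≤ b := pow_le_of_le_one hb0.le hb1.le (Nat.succ_ne_zero j)
    exact neg_nonneg.2 (Real.log_nonpos (by nlinarith) (by nlinarith [pow_nonneg hb0.le (j+1)]))
  · intro j; exact pg_neg_log_le b hb0 hb (j+1) (Nat.succ_ne_zero j)
  · exact ((summable_nat_add_iff 1).2 (summable_geometric_of_lt_one hb0.le hb1)).mul_left 2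

/-- Weight product bound for the pattern-avoidance game: with `0 < b ≤ 1/2`,
`φ(b) = ∏_{j≥1}(1-b^j)` and `C = 8(1-b)⁶/(b·φ(b)²⁴)`, for every integer `c ≥ C` and
every `n₀ ≥ 4` one has
`2^⌊n₀/2⌋ / c^⌊⌈n₀/2⌉/2⌋ ≤ b^⌊⌈n₀/2⌉/2⌋ · ∏_{n=4}^∞ (1 - b^⌊⌈n/2⌉/2⌋)^{n₀}`.
(Here `⌈n/2⌉ = (n+1)/2` and all divisions are natural-number divisions.) -/
theorem pattern_game_weight_bound (b : ℝ) (hb0 : 0 < b) (hb : b ≤ 1 / 2)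
    (c : ℕ)
    (hc : 8 * (1 - b) ^ 6 / (b * (∏' j : ℕ, (1 - b ^ (j + 1))) ^ 24) ≤ (c : ℝ))
    (n₀ : ℕ) (hn₀ : 4 ≤ n₀) :
    (2 : ℝ) ^ (n₀ / 2) / (c : ℝ) ^ ((n₀ + 1) / 2 / 2)
      ≤ b ^ ((n₀ + 1) / 2 / 2) * ∏' k : ℕ, (1 - b ^ ((k + 4 + 1) / 2 / 2)) ^ n₀ := by
  have hb1 : b < 1 := lt_of_le_of_lt hb (by norm_num)
  have h1b0 : (0:ℝ) < 1 - b := by linarith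
  have h1b1 : 1 - b ≤ 1 := by linarith
  have hfac : ∀ n : ℕ, n ≠ 0 → 0 < 1 - b ^ n := by
    intro n hn
    have := pow_le_of_le_one hb0.le hb1.le hn
    linarith
  -- the basic series
  set f1 : ℕ → ℝ := fun j => Real.log (1 - b ^ (j + 1)) with hf1
  have hsumf1 : Summable f1 := pg_summable_log b hb0 hb
  set T : ℝ := ∑' j, f1 j with hT
  have hf10 : f1 0 = Real.log (1 - b) := by simp [hf1]
  -- value of phi
  have hProdφ : HasProd (fun j : ℕ => 1 - b ^ (j + 1)) (rexp T) :=
    HasProd.congr_fun (hsumf1.hasSum.rexp)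
      (fun j => (Real.exp_log (hfac (j+1) (Nat.succ_ne_zero j))).symm)
  have hφeq : (∏' j : ℕ, (1 - b ^ (j + 1))) = rexp T := hProdφ.tprod_eq
  have hφpos : (0:ℝ) < rexp T := Real.exp_pos T
  -- phi ≤ 1 - b
  have hφle : rexp T ≤ 1 - b := by
    have htail : (∑' j : ℕ, f1 (j + 1)) ≤ 0 := by
      apply tsum_nonpos
      intro j
      have h1 : 0 < 1 - b ^ (j + 1 + 1) := hfac _ (Nat.succ_ne_zero _)
      exact Real.log_nonpos (by linarith) (by nlinarith [pow_nonneg hb0.le (j+1+1)])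
    have hTle : T ≤ f1 0 := by
      rw [hT, Summable.tsum_eq_zero_add hsumf1]; linarith
    calc rexp T ≤ rexp (f1 0) := Real.exp_le_exp.2 hTle
      _ = 1 - b := by rw [hf10, Real.exp_log h1b0]
  -- the big product series
  set L : ℕ → ℝ := fun k => Real.log (1 - b ^ ((k + 4 + 1) / 2 / 2)) with hL
  have hEne : ∀ k : ℕ, (k + 4 + 1) / 2 / 2 ≠ 0 := by intro k; omega
  set e : ℕ × Fin 4 ≃ ℕ := (Nat.divModEquiv 4).symm with he
  have heval : ∀ p : ℕ × Fin 4, e p = p.1 * 4 + (p.2 : ℕ) := by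
    intro p; simp [he]
  have hr0 : ((0 : Fin 4) : ℕ) = 0 := rfl
  have hr1 : ((1 : Fin 4) : ℕ) = 1 := rfl
  have hr2 : ((2 : Fin 4) : ℕ) = 2 := rfl
  have hr3 : ((3 : Fin 4) : ℕ) = 3 := rfl
  have hLval : ∀ (q : ℕ) (r : Fin 4),
      L (e (q, r)) = if (r : ℕ) = 3 then f1 (q + 1) else f1 q := by
    intro q r
    have hr : (r : ℕ) < 4 := r.isLt
    have h4 : e (q, r) = q * 4 + (r : ℕ) := heval (q, r)
    simp only [hL, hf1, h4]
    by_cases h : (r : ℕ) = 3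
    · rw [if_pos h, show (q * 4 + (r:ℕ) + 4 + 1) / 2 / 2 = q + 1 + 1 by omega]
    · rw [if_neg h, show (q * 4 + (r:ℕ) + 4 + 1) / 2 / 2 = q + 1 by omega]
  have hfiber : ∀ q : ℕ, L (e (q, 0)) = f1 q ∧ L (e (q, 1)) = f1 q ∧ L (e (q, 2)) = f1 q
      ∧ L (e (q, 3)) = f1 (q + 1) := by
    intro q
    refine ⟨?_, ?_, ?_, ?_⟩ <;>
      rw [hLval] <;> simp [hr0, hr1, hr2, hr3]
  have hsumf1' : Summable (fun j : ℕ => f1 (j + 1)) := (summable_nat_add_iff 1).2 hsumf1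
  -- summability of L via the equivalence
  have hsumLe : Summable (fun p : ℕ × Fin 4 => L (e p)) := by
    rw [← summable_neg_iff]
    rw [summable_prod_of_nonneg]
    · constructor
      · intro q; exact Summable.of_finite
      · apply Summable.congr (f := fun q : ℕ => 3 * (-(f1 q)) + -(f1 (q + 1)))
        · exact ((hsumf1.neg.mul_left 3).add hsumf1'.neg)
        · intro q
          rw [tsum_fintype, Fin.sum_univ_four,
            (hfiber q).1, (hfiber q).2.1, (hfiber q).2.2.1, (hfiber q).2.2.2]
          ring
    · intro p
      have h1 : 0 < 1 - b ^ ((e p + 4 + 1) / 2 / 2) := hfac _ (hEne _)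
      have h2 : (0:ℝ) ≤ b ^ ((e p + 4 + 1) / 2 / 2) := pow_nonneg hb0.le _
      simp only [hL, Pi.zero_apply, neg_nonneg]
      exact Real.log_nonpos (by linarith) (by linarith)
  have hsumL : Summable L := e.summable_iff.mp hsumLe
  -- value of sum of L
  have hLsum : ∑' k, L k = 4 * T - Real.log (1 - b) := by
    have h1 : ∑' k, L k = ∑' p : ℕ × Fin 4, L (e p) := (e.tsum_eq L).symm
    have h2 : ∑' p : ℕ × Fin 4, L (e p) = ∑' q : ℕ, ∑' r : Fin 4, L (e (q, r)) :=
      Summable.tsum_prod' hsumLe fun q => Summable.of_finite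
    have h3 : ∀ q : ℕ, (∑' r : Fin 4, L (e (q, r))) = 3 * f1 q + f1 (q + 1) := by
      intro q
      rw [tsum_fintype, Fin.sum_univ_four,
        (hfiber q).1, (hfiber q).2.1, (hfiber q).2.2.1, (hfiber q).2.2.2]
      ring
    have h4 : ∑' q : ℕ, (3 * f1 q + f1 (q + 1)) = 3 * T + (T - f1 0) := by
      rw [Summable.tsum_add (hsumf1.mul_left 3) hsumf1', tsum_mul_left]
      congr 1
      have h5 := Summable.tsum_eq_zero_add hsumf1
      rw [← hT] at h5
      linarith
    rw [h1, h2, tsum_congr h3, h4, hf10]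
    ring
  -- the target product
  have hProdBig : HasProd (fun k : ℕ => (1 - b ^ ((k + 4 + 1) / 2 / 2)) ^ n₀)
      (rexp ((n₀ : ℝ) * (∑' k, L k))) := by
    apply HasProd.congr_fun ((hsumL.hasSum.mul_left (n₀ : ℝ)).rexp)
    intro k
    simp only [Function.comp]
    rw [Real.exp_nat_mul, Real.exp_log (hfac _ (hEne k))]
  have hBigEq : (∏' k : ℕ, (1 - b ^ ((k + 4 + 1) / 2 / 2)) ^ n₀)
      = (rexp T ^ 4 / (1 - b)) ^ n₀ := by
    rw [hProdBig.tprod_eq, hLsum]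
    rw [mul_sub, Real.exp_sub, mul_comm ((n₀:ℝ)) (4 * T)]
    rw [show 4 * T * (n₀:ℝ) = ((4 * n₀ : ℕ) : ℝ) * T by push_cast; ring]
    rw [Real.exp_nat_mul, show (n₀:ℝ) * Real.log (1 - b) = ((n₀:ℕ):ℝ) * Real.log (1-b) by norm_num]
    rw [Real.exp_nat_mul, Real.exp_log h1b0]
    rw [div_pow, ← pow_mul]
  rw [hφeq] at hc
  rw [hBigEq]
  -- now pure algebra
  set φ : ℝ := rexp T with hφ
  set m : ℕ := (n₀ + 1) / 2 / 2 with hm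
  have hmn1 : n₀ / 2 ≤ 3 * m := by omega
  have hmn2 : n₀ ≤ 6 * m := by omega
  have hbne : b ≠ 0 := ne_of_gt hb0
  have h1bne : (1 - b) ≠ 0 := ne_of_gt h1b0
  have hφne : φ ≠ 0 := ne_of_gt hφpos
  have hC0 : (0:ℝ) < 8 * (1 - b) ^ 6 / (b * φ ^ 24) := by positivity
  have hc0 : (0:ℝ) < (c : ℝ) := lt_of_lt_of_le hC0 hc
  rw [div_le_iff₀ (by positivity)]
  -- key algebraic inequality
  have h1 : φ ^ (24 * m) ≤ (1 - b) ^ (24 * m - 4 * n₀) * φ ^ (4 * n₀) := by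
    calc φ ^ (24 * m) = φ ^ (24 * m - 4 * n₀) * φ ^ (4 * n₀) := by
          rw [← pow_add]; congr 1; omega
      _ ≤ (1 - b) ^ (24 * m - 4 * n₀) * φ ^ (4 * n₀) := by
          gcongr
  have h2 : (1 - b) ^ n₀ * (1 - b) ^ (24 * m - 4 * n₀) ≤ (1 - b) ^ (6 * m) := by
    rw [← pow_add]
    exact pow_le_pow_of_le_one h1b0.le h1b1 (by omega)
  have main : (2:ℝ) ^ (3 * m) * ((1 - b) ^ n₀ * (b ^ m * φ ^ (24 * m)))
      ≤ b ^ m * φ ^ (4 * n₀) * (8 ^ m * (1 - b) ^ (6 * m)) := by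
    calc (2:ℝ) ^ (3 * m) * ((1 - b) ^ n₀ * (b ^ m * φ ^ (24 * m)))
        ≤ (2:ℝ) ^ (3 * m) * ((1 - b) ^ n₀ * (b ^ m * ((1 - b) ^ (24 * m - 4 * n₀) * φ ^ (4 * n₀)))) := by
          gcongr
      _ = b ^ m * φ ^ (4 * n₀) * ((2:ℝ) ^ (3 * m) * ((1 - b) ^ n₀ * (1 - b) ^ (24 * m - 4 * n₀))) := by
          ring
      _ ≤ b ^ m * φ ^ (4 * n₀) * ((2:ℝ) ^ (3 * m) * (1 - b) ^ (6 * m)) := by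
          gcongr
      _ = b ^ m * φ ^ (4 * n₀) * (8 ^ m * (1 - b) ^ (6 * m)) := by
          rw [show (8:ℝ) ^ m = 2 ^ (3 * m) by rw [pow_mul]; norm_num]
  have hBeq : b ^ m * (φ ^ 4 / (1 - b)) ^ n₀ * (8 * (1 - b) ^ 6 / (b * φ ^ 24)) ^ m
      = b ^ m * φ ^ (4 * n₀) * (8 ^ m * (1 - b) ^ (6 * m)) / ((1 - b) ^ n₀ * (b ^ m * φ ^ (24 * m))) := by
    rw [div_pow, div_pow, mul_pow, mul_pow, ← pow_mul, ← pow_mul, ← pow_mul]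
    field_simp
  calc (2:ℝ) ^ (n₀ / 2) ≤ 2 ^ (3 * m) := by
        apply pow_le_pow_right₀ (by norm_num) hmn1
    _ ≤ b ^ m * (φ ^ 4 / (1 - b)) ^ n₀ * (8 * (1 - b) ^ 6 / (b * φ ^ 24)) ^ m := by
        rw [hBeq, le_div_iff₀ (by positivity)]
        exact main
    _ ≤ b ^ m * (φ ^ 4 / (1 - b)) ^ n₀ * (c:ℝ) ^ m := by
        gcongr
end

section
/- If Player 1 has a strategy in the (1:t) biased binary sequence game guaranteeing that identical blocks of any length n > N are at distance greater than (2+ε)^{n/(t+1)}, then a contradiction follows: specifically, if S is the play against Player 2's all-zeros strategy and S' is the subsequence of Player 1's moves, then for sufficiently large n' the sequence S' would contain no two identical blocks of length n' within distance 2^{n'}, contradicting the pigeonhole principle applied to the first 2^{n'}+n' terms of S'. -/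
/-- Theorem 1.3 is essentially best possible: there is no play of the `(1:t)` biased
binary sequence game in which Player 2 plays all zeros (positions `≢ 1 (mod t+1)` are
`0`) and every pair of identical blocks of any length `n > N` lies at distance greater
than `(2+ε)^{n/(t+1)}`; otherwise the subsequence of Player 1's moves would contain no
two identical blocks of some large length `n'` within distance `2^{n'}`, contradicting
the pigeonhole principle. -/
theorem beck_game_best_possible (t : ℕ) (ht : 1 ≤ t) (ε : ℝ) (hε : 0 < ε) (N : ℕ) :
    ¬ ∃ S : ℕ → Fin 2,
      (∀ m : ℕ, m % (t + 1) ≠ 1 → S m = 0) ∧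
      (∀ k ℓ n : ℕ, N < n → k < ℓ → (∀ i < n, S (k + i) = S (ℓ + i)) →
        ((2 : ℝ) + ε) ^ ((n : ℝ) / ((t : ℝ) + 1)) < ((ℓ - k : ℕ) : ℝ)) := by
  rintro ⟨S, h1, h2⟩
  have h2e : (0:ℝ) < 2 + ε := by linarith
  have hθ1 : (1:ℝ) < (2 + ε) / 2 := by linarith
  obtain ⟨m, hm⟩ := pow_unbounded_of_one_lt (((2:ℝ) + ε) * ((t:ℝ) + 1)) hθ1
  set n' := max m (N + 1) with hn'def
  have hn'1 : 1 ≤ n' := le_trans (by omega) (le_max_right m (N + 1))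
  have hn'N : N < n' := lt_of_lt_of_le (Nat.lt_succ_self N) (le_max_right m (N + 1))
  have hθ : ((2:ℝ) + ε) * ((t:ℝ) + 1) < ((2 + ε) / 2) ^ n' :=
    lt_of_lt_of_le hm (pow_le_pow_right₀ (le_of_lt hθ1) (le_max_left m (N + 1)))
  -- key numeric inequality
  have hpow : (((2:ℝ) + ε) / 2) ^ n' * 2 ^ n' = (2 + ε) ^ n' := by
    rw [← mul_pow, div_mul_cancel₀]; norm_num
  have hsplit : ((2:ℝ) + ε) ^ n' = (2 + ε) * (2 + ε) ^ (n' - 1) := by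
    rw [← pow_succ']; congr 1; omega
  have step : ((2:ℝ) + ε) * (((t:ℝ) + 1) * 2 ^ n') < (2 + ε) * ((2 + ε) ^ (n' - 1)) := by
    have h := mul_lt_mul_of_pos_right hθ (pow_pos (by norm_num : (0:ℝ) < 2) n')
    calc ((2:ℝ) + ε) * (((t:ℝ) + 1) * 2 ^ n') = ((2 + ε) * ((t:ℝ) + 1)) * 2 ^ n' := by ring
      _ < ((2 + ε) / 2) ^ n' * 2 ^ n' := h
      _ = (2 + ε) ^ n' := hpow
      _ = (2 + ε) * (2 + ε) ^ (n' - 1) := hsplit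
  have key1 : ((t:ℝ) + 1) * 2 ^ n' < (2 + ε) ^ (n' - 1) := (mul_lt_mul_iff_right₀ h2e).mp step
  -- pigeonhole
  classical
  set f : ℕ → (Fin n' → Fin 2) := fun j => fun i => S ((t + 1) * (j + i.1) + 1) with hf
  have hcard : (Finset.univ : Finset (Fin n' → Fin 2)).card < (Finset.range (2 ^ n' + 1)).card := by
    rw [Finset.card_univ, Finset.card_range, Fintype.card_fun, Fintype.card_fin, Fintype.card_fin]
    omega
  obtain ⟨a, ha, b, hb, hab, hfab⟩ :=
    Finset.exists_ne_map_eq_of_card_lt_of_maps_to hcard (fun x _ => Finset.mem_univ (f x))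
  have key : ∀ a b : ℕ, a ∈ Finset.range (2 ^ n' + 1) → b ∈ Finset.range (2 ^ n' + 1) →
      a < b → f a = f b → False := by
    intro a b ha hb hlt hfab
    set n := (t + 1) * (n' - 1) + 1 with hn
    have hNn : N < n := by
      have : n' - 1 ≤ (t + 1) * (n' - 1) := Nat.le_mul_of_pos_left _ (by omega)
      omega
    have hblocks : ∀ i < n, S ((t + 1) * a + 1 + i) = S ((t + 1) * b + 1 + i) := by
      intro i hi
      obtain ⟨q, r, hr, hieq⟩ : ∃ q r, r < t + 1 ∧ i = (t + 1) * q + r :=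
        ⟨i / (t + 1), i % (t + 1), Nat.mod_lt _ (by omega), (Nat.div_add_mod i (t + 1)).symm⟩
      rcases Nat.eq_zero_or_pos r with hr0 | hr0
      · -- Player 1's positions: use block equality of f
        subst hr0
        have hq : q < n' := by
          by_contra hq
          push_neg at hq
          have : (t + 1) * n' ≤ (t + 1) * q := Nat.mul_le_mul_left _ hq
          have h' : (t + 1) * (n' - 1) + (t + 1) = (t + 1) * n' := by
            rw [← Nat.mul_succ]; congr 1; omega
          omega
        have hpa : (t + 1) * a + 1 + i = (t + 1) * (a + q) + 1 := by
          rw [hieq]; ring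
        have hpb : (t + 1) * b + 1 + i = (t + 1) * (b + q) + 1 := by
          rw [hieq]; ring
        have := congrFun hfab ⟨q, hq⟩
        simp only [hf] at this
        rw [hpa, hpb]
        exact this
      · -- Player 2's positions: both zero
        have hza : ((t + 1) * a + 1 + i) % (t + 1) ≠ 1 := by
          have : (t + 1) * a + 1 + i = (t + 1) * (a + q) + (1 + r) := by rw [hieq]; ring
          rw [this, Nat.mul_add_mod]
          rcases eq_or_lt_of_le (show 1 + r ≤ t + 1 by omega) with h | h
          · rw [h, Nat.mod_self]; omega
          · rw [Nat.mod_eq_of_lt h]; omega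
        have hzb : ((t + 1) * b + 1 + i) % (t + 1) ≠ 1 := by
          have : (t + 1) * b + 1 + i = (t + 1) * (b + q) + (1 + r) := by rw [hieq]; ring
          rw [this, Nat.mul_add_mod]
          rcases eq_or_lt_of_le (show 1 + r ≤ t + 1 by omega) with h | h
          · rw [h, Nat.mod_self]; omega
          · rw [Nat.mod_eq_of_lt h]; omega
        rw [h1 _ hza, h1 _ hzb]
    have hklt : (t + 1) * a + 1 < (t + 1) * b + 1 := by
      have := (Nat.mul_lt_mul_left (show 0 < t + 1 by omega)).mpr hlt
      omega
    have hmain := h2 ((t + 1) * a + 1) ((t + 1) * b + 1) n hNn hklt hblocks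
    -- simplify the distance
    have hb' : (t + 1) * b = (t + 1) * a + (t + 1) * (b - a) := by
      rw [← Nat.mul_add, Nat.add_sub_cancel' hlt.le]
    have hd : (t + 1) * b + 1 - ((t + 1) * a + 1) = (t + 1) * (b - a) := by omega
    rw [hd] at hmain
    have hba : b - a ≤ 2 ^ n' := by
      simp only [Finset.mem_range] at hb
      omega
    have hdr : (((t + 1) * (b - a) : ℕ) : ℝ) ≤ ((t:ℝ) + 1) * 2 ^ n' := by
      push_cast
      have : ((b - a : ℕ) : ℝ) ≤ (2:ℝ) ^ n' := by
        exact_mod_cast Nat.cast_le.mpr hba |>.trans (by push_cast; norm_num)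
      nlinarith [this, (show (0:ℝ) ≤ (t:ℝ) + 1 by positivity)]
    -- exponent comparison
    have hexp : (((n' - 1 : ℕ)) : ℝ) ≤ (n : ℝ) / ((t:ℝ) + 1) := by
      rw [le_div_iff₀ (by positivity : (0:ℝ) < (t:ℝ) + 1)]
      have hcastn : (n : ℝ) = ((t:ℝ) + 1) * ((n' - 1 : ℕ) : ℝ) + 1 := by
        rw [hn]; push_cast; ring
      rw [hcastn]; nlinarith [(show (0:ℝ) ≤ ((n' - 1 : ℕ) : ℝ) by positivity)]
    have hrpow : ((2:ℝ) + ε) ^ (((n' - 1 : ℕ)) : ℝ) ≤ (2 + ε) ^ ((n : ℝ) / ((t:ℝ) + 1)) :=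
      Real.rpow_le_rpow_left_iff (by linarith : (1:ℝ) < 2 + ε) |>.mpr hexp
    rw [Real.rpow_natCast] at hrpow
    linarith [hmain, hrpow, key1, hdr]
  rcases hab.lt_or_gt with hlt | hlt
  · exact key a b ha hb hlt hfab
  · exact key b a hb ha hlt hfab.symm
end
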